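/- arXiv:2112.14632 — 4 statements merged into one kernel-verified Lean document; each statement's English description precedes it below -/
import Mathlib

section
/- For n ≥ 2, the set GL(n,ℝ) of invertible n×n real matrices is an ample subset of the space of all n×n real matrices: the convex hull of each of its two connected components (matrices of positive determinant and matrices of negative determinant) equals the whole matrix space. -/
open Matrix Set
variable {n : ℕ}

lemma joinedIn_of_path (f : ℝ → Matrix (Fin n) (Fin n) ℝ)
    (X Y : Matrix (Fin n) (Fin n) ℝ) (h0 : f 0 = X) (h1 : f 1 = Y) (hf : Continuous f)
    (h : ∀ s ∈ Set.Icc (0:ℝ) 1, (f s).det ≠ 0) :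
    JoinedIn {A : Matrix (Fin n) (Fin n) ℝ | A.det ≠ 0} X Y :=
  h0 ▸ h1 ▸ ⟨⟨⟨fun t => f t, hf.comp continuous_subtype_val⟩, rfl, rfl⟩, fun t => h t t.2⟩

lemma joined_mul_posDiag (X : Matrix (Fin n) (Fin n) ℝ) (hX : X.det ≠ 0)
    (d : Fin n → ℝ) (hd : ∀ i, 0 < d i) :
    JoinedIn {A : Matrix (Fin n) (Fin n) ℝ | A.det ≠ 0} X (X * Matrix.diagonal d) := by
  refine joinedIn_of_path
    (fun s : ℝ => X * Matrix.diagonal (fun i => 1 - s + s * d i))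
    X (X * Matrix.diagonal d) (by simp) (by simp)
    (continuous_const.matrix_mul ((continuous_pi fun i =>
      ((continuous_const.sub continuous_id).add (continuous_id.mul continuous_const))).matrix_diagonal))
    (by
      intro s hs
      rw [Set.mem_Icc] at hs
      rw [Matrix.det_mul, Matrix.det_diagonal]
      refine mul_ne_zero hX (Finset.prod_ne_zero_iff.2 fun i _ => ?_)
      have := hd i
      have hpos : 0 < 1 - s + s * d i := by
        rcases eq_or_lt_of_le hs.1 with h | h
        · nlinarith
        · nlinarith [mul_pos h this]
      exact ne_of_gt hpos)

noncomputable def negPair (i j : Fin n) : Matrix (Fin n) (Fin n) ℝ :=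
  Matrix.diagonal (fun a => if a = i ∨ a = j then -1 else 1)

lemma joined_mul_negPair (X : Matrix (Fin n) (Fin n) ℝ) (hX : X.det ≠ 0)
    {i j : Fin n} (hij : i ≠ j) :
    JoinedIn {A : Matrix (Fin n) (Fin n) ℝ | A.det ≠ 0} X (X * negPair i j) := by
  have mul0 : ∀ (a b c d : Fin n), b ≠ c →
      Matrix.single a b (1:ℝ) * Matrix.single c d (1:ℝ) = 0 := fun a b c d h =>
    Matrix.single_mul_single_of_ne 1 a b c h 1
  set P : Matrix (Fin n) (Fin n) ℝ := Matrix.single i i 1 + Matrix.single j j 1 with hP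
  set Q : Matrix (Fin n) (Fin n) ℝ := Matrix.single i j 1 - Matrix.single j i 1 with hQ
  have hPP : P * P = P := by
    simp [hP, add_mul, mul_add, Matrix.single_mul_single_same,
      mul0 _ _ _ _ hij, mul0 _ _ _ _ hij.symm]
  have hPQ : P * Q = Q := by
    simp [hP, hQ, add_mul, mul_sub, Matrix.single_mul_single_same,
      mul0 _ _ _ _ hij, mul0 _ _ _ _ hij.symm]
    all_goals abel
  have hQP : Q * P = Q := by
    simp [hP, hQ, sub_mul, mul_add, Matrix.single_mul_single_same,
      mul0 _ _ _ _ hij, mul0 _ _ _ _ hij.symm]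
    all_goals abel
  have hQQ : Q * Q = -P := by
    simp only [hP, hQ, sub_mul, mul_sub, Matrix.single_mul_single_same,
      mul0 _ _ _ _ hij, mul0 _ _ _ _ hij.symm, one_mul]
    abel
  have hR : ∀ c s : ℝ, c ^ 2 + s ^ 2 = 1 →
      (1 + (c - 1) • P + s • Q) * (1 + (c - 1) • P + (-s) • Q) = 1 := by
    intro c s hcs
    have expand : (1 + (c - 1) • P + s • Q) * (1 + (c - 1) • P + (-s) • Q)
        = 1 + ((c - 1) + (c - 1) + (c - 1) * (c - 1) + s * s) • P := by
      simp only [add_mul, mul_add, one_mul, mul_one, Matrix.smul_mul, Matrix.mul_smul,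
        hPP, hPQ, hQP, hQQ, smul_smul, smul_neg, add_smul, smul_add]
      module
    rw [expand]
    have hz : (c - 1) + (c - 1) + (c - 1) * (c - 1) + s * s = 0 := by nlinarith
    rw [hz, zero_smul, add_zero]
  have hend : (1 : Matrix (Fin n) (Fin n) ℝ) + (-1 - 1 : ℝ) • P = negPair i j := by
    ext a b
    simp only [hP, negPair, Matrix.add_apply, Matrix.smul_apply, Matrix.one_apply,
      Matrix.diagonal_apply, Matrix.single, Matrix.of_apply, smul_eq_mul]
    by_cases hab : a = b
    · subst hab
      by_cases hai : a = i
      · subst hai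
        have hja : j ≠ a := hij.symm
        simp [hja]
        all_goals norm_num
      · by_cases haj : a = j
        · subst haj
          have hia : i ≠ a := hij
          simp [hia]
          all_goals norm_num
        · have hia : i ≠ a := fun h => hai h.symm
          have hja : j ≠ a := fun h => haj h.symm
          simp [hai, haj, hia, hja]
    · have hia : ¬(i = a ∧ i = b) := fun h => hab (h.1.symm.trans h.2)
      have hja : ¬(j = a ∧ j = b) := fun h => hab (h.1.symm.trans h.2)
      simp [hia, hja, hab]
  refine joinedIn_of_path
    (fun s : ℝ => X * (1 + (Real.cos (Real.pi * s) - 1) • P + Real.sin (Real.pi * s) • Q))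
    X (X * negPair i j) (by simp) ?_ ?_ ?_
  · show X * (1 + (Real.cos (Real.pi * 1) - 1) • P + Real.sin (Real.pi * 1) • Q) = _
    rw [mul_one, Real.cos_pi, Real.sin_pi, zero_smul, add_zero, hend]
  · apply continuous_const.matrix_mul
    exact (continuous_const.add (((Real.continuous_cos.comp
        (continuous_const.mul continuous_id)).sub continuous_const).smul continuous_const)).add
      ((Real.continuous_sin.comp (continuous_const.mul continuous_id)).smul continuous_const)
  · intro s hs
    rw [Matrix.det_mul]
    refine mul_ne_zero hX ?_
    have hprod := hR (Real.cos (Real.pi * s)) (Real.sin (Real.pi * s))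
      (by rw [add_comm]; exact Real.sin_sq_add_cos_sq _)
    have hdet := congrArg Matrix.det hprod
    rw [Matrix.det_mul, Matrix.det_one] at hdet
    exact left_ne_zero_of_mul_eq_one hdet



lemma joined_add_smul (K A : Matrix (Fin n) (Fin n) ℝ) (hK : K.det ≠ 0) :
    ∃ T : ℝ, 1 ≤ T ∧ ∀ t, T ≤ t →
      JoinedIn {B : Matrix (Fin n) (Fin n) ℝ | B.det ≠ 0} K (A + t • K) := by
  have hcont : Continuous fun u : ℝ => (K + u • A).det :=
    (continuous_const.add (continuous_id.smul continuous_const)).matrix_det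
  have hev : ∀ᶠ u in nhds (0:ℝ), (K + u • A).det ≠ 0 :=
    hcont.continuousAt.eventually_ne (by simpa using hK)
  obtain ⟨δ, hδpos, hδ⟩ := Metric.eventually_nhds_iff.mp hev
  refine ⟨max 1 (2/δ), le_max_left _ _, fun t ht => ?_⟩
  have ht1 : 1 ≤ t := le_trans (le_max_left _ _) ht
  have htδ : 2/δ ≤ t := le_trans (le_max_right _ _) ht
  have hδt : 2 ≤ t * δ := by
    rw [div_le_iff₀ hδpos] at htδ; linarith
  refine joinedIn_of_path (fun s : ℝ => (1 - s + s * t) • K + s • A) K (A + t • K)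
    (by norm_num) (by norm_num [add_comm]) ?_ ?_
  · exact (((continuous_const.sub continuous_id).add
      (continuous_id.mul continuous_const)).smul continuous_const).add
      (continuous_id.smul continuous_const)
  · intro s hs
    rw [Set.mem_Icc] at hs
    show ((1 - s + s * t) • K + s • A).det ≠ 0
    set c : ℝ := 1 - s + s * t with hc
    have hcpos : 0 < c := by nlinarith
    have heq : c • K + s • A = c • (K + (s / c) • A) := by
      rw [smul_add, smul_smul, mul_div_cancel₀ _ (ne_of_gt hcpos)]
    rw [heq, Matrix.det_smul]
    refine mul_ne_zero (pow_ne_zero _ (ne_of_gt hcpos)) (hδ ?_)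
    have hsc : s / c < δ := by
      rw [div_lt_iff₀ hcpos]
      nlinarith [mul_nonneg hs.1 (by nlinarith : (0:ℝ) ≤ t * δ - 2)]
    rw [Real.dist_eq, sub_zero, abs_of_nonneg (div_nonneg hs.1 (le_of_lt hcpos))]
    exact hsc


lemma joined_negFirst (M : Matrix (Fin n) (Fin n) ℝ) (hM : M.det ≠ 0) :
    ∀ k : ℕ, 2 * k ≤ n →
    JoinedIn {A : Matrix (Fin n) (Fin n) ℝ | A.det ≠ 0} M
      (M * Matrix.diagonal (fun i : Fin n => if (i : ℕ) < 2 * k then (-1:ℝ) else 1))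
  | 0, _ => by
      simpa using JoinedIn.refl (F := {A : Matrix (Fin n) (Fin n) ℝ | A.det ≠ 0}) hM
  | (k+1), h => by
      have ih := joined_negFirst M hM k (by omega)
      have hi : 2 * k < n := by omega
      have hj : 2 * k + 1 < n := by omega
      have hne : (⟨2 * k, hi⟩ : Fin n) ≠ ⟨2 * k + 1, hj⟩ := by
        simp [Fin.ext_iff]
      have hdet : (M * Matrix.diagonal
          (fun i : Fin n => if (i : ℕ) < 2 * k then (-1:ℝ) else 1)).det ≠ 0 := ih.target_mem
      have step := joined_mul_negPair _ hdet hne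
      have hdd : (M * Matrix.diagonal (fun i : Fin n => if (i:ℕ) < 2*k then (-1:ℝ) else 1)) *
            negPair ⟨2*k, hi⟩ ⟨2*k+1, hj⟩
          = M * Matrix.diagonal (fun i : Fin n => if (i:ℕ) < 2*(k+1) then (-1:ℝ) else 1) := by
        rw [negPair, mul_assoc, Matrix.diagonal_mul_diagonal]
        congr 1
        refine congrArg Matrix.diagonal ?_
        funext a
        simp only [Fin.ext_iff]
        split_ifs <;> first | (exfalso; omega) | norm_num
      rw [← hdd]
      exact ih.trans step

lemma mem_hull_of_three (M : Matrix (Fin n) (Fin n) ℝ)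
    (K₁ K₂ K₃ : Matrix (Fin n) (Fin n) ℝ)
    (h1 : JoinedIn {B : Matrix (Fin n) (Fin n) ℝ | B.det ≠ 0} M K₁)
    (h2 : JoinedIn {B : Matrix (Fin n) (Fin n) ℝ | B.det ≠ 0} M K₂)
    (h3 : JoinedIn {B : Matrix (Fin n) (Fin n) ℝ | B.det ≠ 0} M K₃)
    (hsum : K₁ + K₂ + K₃ = 0) (A : Matrix (Fin n) (Fin n) ℝ) :
    A ∈ convexHull ℝ (pathComponentIn {B : Matrix (Fin n) (Fin n) ℝ | B.det ≠ 0} M) := by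
  obtain ⟨T₁, hT₁, hseg₁⟩ := joined_add_smul K₁ A h1.target_mem
  obtain ⟨T₂, hT₂, hseg₂⟩ := joined_add_smul K₂ A h2.target_mem
  obtain ⟨T₃, hT₃, hseg₃⟩ := joined_add_smul K₃ A h3.target_mem
  set T : ℝ := max T₁ (max T₂ T₃) with hT
  have hB₁ : A + T • K₁ ∈ pathComponentIn {B : Matrix (Fin n) (Fin n) ℝ | B.det ≠ 0} M :=
    h1.trans (hseg₁ T (le_max_left _ _))
  have hB₂ : A + T • K₂ ∈ pathComponentIn {B : Matrix (Fin n) (Fin n) ℝ | B.det ≠ 0} M :=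
    h2.trans (hseg₂ T (le_trans (le_max_left _ _) (le_max_right _ _)))
  have hB₃ : A + T • K₃ ∈ pathComponentIn {B : Matrix (Fin n) (Fin n) ℝ | B.det ≠ 0} M :=
    h3.trans (hseg₃ T (le_trans (le_max_right _ _) (le_max_right _ _)))
  have hsub := subset_convexHull ℝ (pathComponentIn {B : Matrix (Fin n) (Fin n) ℝ | B.det ≠ 0} M)
  have hconv := convex_convexHull ℝ (pathComponentIn {B : Matrix (Fin n) (Fin n) ℝ | B.det ≠ 0} M)
  have m23 : (1/2 : ℝ) • (A + T • K₂) + (1/2 : ℝ) • (A + T • K₃) ∈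
      convexHull ℝ (pathComponentIn {B : Matrix (Fin n) (Fin n) ℝ | B.det ≠ 0} M) :=
    hconv (hsub hB₂) (hsub hB₃) (by norm_num) (by norm_num) (by norm_num)
  have hK₃ : K₃ = -(K₁ + K₂) := eq_neg_of_add_eq_zero_right hsum
  have mA : A = (1/3 : ℝ) • (A + T • K₁) +
      (2/3 : ℝ) • ((1/2 : ℝ) • (A + T • K₂) + (1/2 : ℝ) • (A + T • K₃)) := by
    rw [hK₃]
    module
  rw [mA]
  exact hconv (hsub hB₁) m23 (by norm_num) (by norm_num) (by norm_num)


/-- For `n ≥ 2`, the set `GL(n, ℝ)` of invertible real `n × n` matrices is an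
ample subset of the space of all `n × n` matrices: the convex hull of each of its
path-components equals the whole matrix space. -/
theorem stmt2 (n : ℕ) (hn : 2 ≤ n) (M : Matrix (Fin n) (Fin n) ℝ) (hM : M.det ≠ 0) :
    convexHull ℝ (pathComponentIn {A : Matrix (Fin n) (Fin n) ℝ | A.det ≠ 0} M) =
      Set.univ := by
  apply Set.eq_univ_of_forall
  intro A
  have h1 : JoinedIn {B : Matrix (Fin n) (Fin n) ℝ | B.det ≠ 0} M M := JoinedIn.refl hM
  rcases Nat.even_or_odd n with he | ho
  · -- n even
    obtain ⟨m, hm⟩ := he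
    have hmn : 2 * m ≤ n := by omega
    have hneg := joined_negFirst M hM m hmn
    have hdetD : (M * Matrix.diagonal
        (fun i : Fin n => if (i : ℕ) < 2 * m then (-1:ℝ) else 1)).det ≠ 0 := hneg.target_mem
    have hpos := joined_mul_posDiag _ hdetD (fun _ => (3:ℝ)) (fun _ => by norm_num)
    have heq2 : (M * Matrix.diagonal (fun i : Fin n => if (i : ℕ) < 2 * m then (-1:ℝ) else 1)) *
        Matrix.diagonal (fun _ : Fin n => (3:ℝ)) = M * Matrix.diagonal (fun _ : Fin n => (-3:ℝ)) := by
      rw [mul_assoc, Matrix.diagonal_mul_diagonal]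
      congr 1
      refine congrArg Matrix.diagonal ?_
      funext i
      rw [if_pos (by omega : (i : ℕ) < 2 * m)]
      norm_num
    have h2 : JoinedIn {B : Matrix (Fin n) (Fin n) ℝ | B.det ≠ 0} M
        (M * Matrix.diagonal (fun _ : Fin n => (-3:ℝ))) := by
      rw [← heq2]; exact hneg.trans hpos
    have h3 : JoinedIn {B : Matrix (Fin n) (Fin n) ℝ | B.det ≠ 0} M
        (M * Matrix.diagonal (fun _ : Fin n => (2:ℝ))) :=
      joined_mul_posDiag M hM (fun _ => (2:ℝ)) (fun _ => by norm_num)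
    have hsum : M + M * Matrix.diagonal (fun _ : Fin n => (-3:ℝ)) +
        M * Matrix.diagonal (fun _ : Fin n => (2:ℝ)) = 0 := by
      have hz : (1 : Matrix (Fin n) (Fin n) ℝ) + Matrix.diagonal (fun _ : Fin n => (-3:ℝ)) +
          Matrix.diagonal (fun _ : Fin n => (2:ℝ)) = 0 := by
        ext a b
        by_cases hab : a = b
        · subst hab; simp [Matrix.one_apply]; norm_num
        · simp [Matrix.one_apply, hab, Matrix.diagonal_apply_ne _ hab]
      calc M + M * Matrix.diagonal (fun _ : Fin n => (-3:ℝ)) +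
            M * Matrix.diagonal (fun _ : Fin n => (2:ℝ))
          = M * ((1 : Matrix (Fin n) (Fin n) ℝ) + Matrix.diagonal (fun _ : Fin n => (-3:ℝ)) +
            Matrix.diagonal (fun _ : Fin n => (2:ℝ))) := by
            rw [Matrix.mul_add, Matrix.mul_add, Matrix.mul_one]
        _ = M * 0 := by rw [hz]
        _ = 0 := mul_zero M
    exact mem_hull_of_three M _ _ _ h1 h2 h3 hsum A
  · -- n odd
    obtain ⟨m, hm⟩ := ho
    have hm1 : 1 ≤ m := by omega
    have hi0 : n - 2 < n := by omega
    have hi1 : n - 1 < n := by omega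
    have hne : (⟨n - 2, hi0⟩ : Fin n) ≠ ⟨n - 1, hi1⟩ := by
      simp [Fin.ext_iff]; omega
    -- K₂
    have hmn : 2 * m ≤ n := by omega
    have hneg := joined_negFirst M hM m hmn
    have hdetD : (M * Matrix.diagonal
        (fun i : Fin n => if (i : ℕ) < 2 * m then (-1:ℝ) else 1)).det ≠ 0 := hneg.target_mem
    have hpos2 := joined_mul_posDiag _ hdetD
      (fun i : Fin n => if (i : ℕ) < n - 2 then (3:ℝ) else if (i : ℕ) = n - 2 then 1/2 else 2)
      (fun i => by beta_reduce; split_ifs <;> norm_num)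
    have heq2 : (M * Matrix.diagonal (fun i : Fin n => if (i : ℕ) < 2 * m then (-1:ℝ) else 1)) *
        Matrix.diagonal (fun i : Fin n => if (i : ℕ) < n - 2 then (3:ℝ) else if (i : ℕ) = n - 2 then 1/2 else 2)
        = M * Matrix.diagonal (fun i : Fin n =>
            if (i : ℕ) < n - 2 then (-3:ℝ) else if (i : ℕ) = n - 2 then -(1/2) else 2) := by
      rw [mul_assoc, Matrix.diagonal_mul_diagonal]
      congr 1
      refine congrArg Matrix.diagonal ?_
      funext i
      have hilt : (i : ℕ) < n := i.isLt
      split_ifs <;> first | (exfalso; omega) | norm_num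
    have h2 : JoinedIn {B : Matrix (Fin n) (Fin n) ℝ | B.det ≠ 0} M
        (M * Matrix.diagonal (fun i : Fin n =>
          if (i : ℕ) < n - 2 then (-3:ℝ) else if (i : ℕ) = n - 2 then -(1/2) else 2)) := by
      rw [← heq2]; exact hneg.trans hpos2
    -- K₃
    have hnp := joined_mul_negPair M hM hne
    have hdetN : (M * negPair (⟨n - 2, hi0⟩ : Fin n) ⟨n - 1, hi1⟩).det ≠ 0 := hnp.target_mem
    have hpos3 := joined_mul_posDiag _ hdetN
      (fun i : Fin n => if (i : ℕ) < n - 2 then (2:ℝ) else if (i : ℕ) = n - 2 then 1/2 else 3)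
      (fun i => by beta_reduce; split_ifs <;> norm_num)
    have heq3 : (M * negPair (⟨n - 2, hi0⟩ : Fin n) ⟨n - 1, hi1⟩) *
        Matrix.diagonal (fun i : Fin n => if (i : ℕ) < n - 2 then (2:ℝ) else if (i : ℕ) = n - 2 then 1/2 else 3)
        = M * Matrix.diagonal (fun i : Fin n =>
            if (i : ℕ) < n - 2 then (2:ℝ) else if (i : ℕ) = n - 2 then -(1/2) else -3) := by
      rw [negPair, mul_assoc, Matrix.diagonal_mul_diagonal]
      congr 1
      refine congrArg Matrix.diagonal ?_
      funext i
      have hilt : (i : ℕ) < n := i.isLt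
      simp only [Fin.ext_iff]
      split_ifs <;> first | (exfalso; omega) | norm_num
    have h3 : JoinedIn {B : Matrix (Fin n) (Fin n) ℝ | B.det ≠ 0} M
        (M * Matrix.diagonal (fun i : Fin n =>
          if (i : ℕ) < n - 2 then (2:ℝ) else if (i : ℕ) = n - 2 then -(1/2) else -3)) := by
      rw [← heq3]; exact hnp.trans hpos3
    have hsum : M + M * Matrix.diagonal (fun i : Fin n =>
          if (i : ℕ) < n - 2 then (-3:ℝ) else if (i : ℕ) = n - 2 then -(1/2) else 2) +
        M * Matrix.diagonal (fun i : Fin n =>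
          if (i : ℕ) < n - 2 then (2:ℝ) else if (i : ℕ) = n - 2 then -(1/2) else -3) = 0 := by
      have hz : (1 : Matrix (Fin n) (Fin n) ℝ) + Matrix.diagonal (fun i : Fin n =>
            if (i : ℕ) < n - 2 then (-3:ℝ) else if (i : ℕ) = n - 2 then -(1/2) else 2) +
          Matrix.diagonal (fun i : Fin n =>
            if (i : ℕ) < n - 2 then (2:ℝ) else if (i : ℕ) = n - 2 then -(1/2) else -3) = 0 := by
        ext a b
        by_cases hab : a = b
        · subst hab
          simp only [Matrix.add_apply, Matrix.one_apply_eq, Matrix.diagonal_apply_eq,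
            Matrix.zero_apply]
          split_ifs <;> norm_num
        · simp [Matrix.one_apply, hab, Matrix.diagonal_apply_ne _ hab]
      calc M + M * Matrix.diagonal (fun i : Fin n =>
              if (i : ℕ) < n - 2 then (-3:ℝ) else if (i : ℕ) = n - 2 then -(1/2) else 2) +
            M * Matrix.diagonal (fun i : Fin n =>
              if (i : ℕ) < n - 2 then (2:ℝ) else if (i : ℕ) = n - 2 then -(1/2) else -3)
          = M * ((1 : Matrix (Fin n) (Fin n) ℝ) + Matrix.diagonal (fun i : Fin n =>
              if (i : ℕ) < n - 2 then (-3:ℝ) else if (i : ℕ) = n - 2 then -(1/2) else 2) +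
            Matrix.diagonal (fun i : Fin n =>
              if (i : ℕ) < n - 2 then (2:ℝ) else if (i : ℕ) = n - 2 then -(1/2) else -3)) := by
            rw [Matrix.mul_add, Matrix.mul_add, Matrix.mul_one]
        _ = M * 0 := by rw [hz]
        _ = 0 := mul_zero M
    exact mem_hull_of_three M _ _ _ h1 h2 h3 hsum A
end

section
/- The complement of a linear subspace of codimension at least 2 in ℝⁿ is ample: if V ⊂ ℝⁿ is a linear subspace with dim V ≤ n - 2, then ℝⁿ \ V is path-connected and its convex hull is all of ℝⁿ. -/
/-- The complement of a linear subspace of codimension at least 2 in `ℝⁿ` is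
ample: if `V ⊆ ℝⁿ` is a linear subspace with `dim V ≤ n - 2`, then `ℝⁿ \ V` is
path-connected and its convex hull is all of `ℝⁿ`. -/
theorem stmt4 (n : ℕ) (V : Submodule ℝ (Fin n → ℝ))
    (hV : Module.finrank ℝ V + 2 ≤ n) :
    IsPathConnected ((V : Set (Fin n → ℝ))ᶜ) ∧
      convexHull ℝ ((V : Set (Fin n → ℝ))ᶜ) = Set.univ := by
  have hq : Module.finrank ℝ V + Module.finrank ℝ ((Fin n → ℝ) ⧸ V) = n := by
    simpa [Nat.add_comm] using Submodule.finrank_quotient_add_finrank V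
  have h2 : 2 ≤ Module.finrank ℝ ((Fin n → ℝ) ⧸ V) := by omega
  have hcodim : 1 < Module.rank ℝ ((Fin n → ℝ) ⧸ V) := by
    rw [← Module.finrank_eq_rank]
    exact_mod_cast h2
  have hpc := isPathConnected_compl_of_one_lt_codim hcodim
  refine ⟨hpc, ?_⟩
  have hamp : AmpleSet ((V : Set (Fin n → ℝ))ᶜ) := AmpleSet.of_one_lt_codim hcodim
  obtain ⟨x, hx⟩ : ((V : Set (Fin n → ℝ))ᶜ).Nonempty := ⟨hpc.choose, hpc.choose_spec.1⟩
  have := hamp x hx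
  have hsub : connectedComponentIn ((V : Set (Fin n → ℝ))ᶜ) x ⊆ _ :=
    connectedComponentIn_subset _ x
  refine Set.eq_univ_of_univ_subset ?_
  rw [← this]
  exact convexHull_mono hsub
end

section
/- The set H⁻ = {(x,y,z) ∈ ℝ³ : xy - z² < 0} is path-connected and ample: its convex hull equals ℝ³. -/
/-- The set `H⁻`. -/
def Sneg : Set (ℝ × ℝ × ℝ) := {p : ℝ × ℝ × ℝ | p.1 * p.2.1 - p.2.2 ^ 2 < 0}

/-- If every point of the segment from `a` to `b` satisfies the defining inequality,
then `a` and `b` are joined in `Sneg`. -/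
lemma joined_seg (a b : ℝ × ℝ × ℝ)
    (h : ∀ t : ℝ, 0 ≤ t → t ≤ 1 →
      ((1-t)*a.1 + t*b.1) * ((1-t)*a.2.1 + t*b.2.1) - ((1-t)*a.2.2 + t*b.2.2)^2 < 0) :
    JoinedIn Sneg a b := by
  have ha : a ∈ segment ℝ a b := left_mem_segment ℝ a b
  have hb : b ∈ segment ℝ a b := right_mem_segment ℝ a b
  have hseg : segment ℝ a b ⊆ Sneg := by
    rw [segment_eq_image]
    rintro q ⟨t, ⟨ht0, ht1⟩, rfl⟩
    have h' := h t ht0 ht1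
    obtain ⟨a1, a2, a3⟩ := a
    obtain ⟨b1, b2, b3⟩ := b
    simpa [Sneg, Set.mem_setOf_eq, Prod.smul_mk, Prod.mk_add_mk, smul_eq_mul] using h'
  exact (((convex_segment a b).isPathConnected ⟨a, ha⟩).joinedIn a ha b hb).mono hseg

lemma tail_joined (x y Z : ℝ) (h2 : |x| * |y| + |y| < Z^2) :
    JoinedIn Sneg (x, y, Z) (((1:ℝ), (-1:ℝ), (0:ℝ))) := by
  have hxy : x*y ≤ |x| * |y| := by rw [← abs_mul]; exact le_abs_self _
  have hy : y ≤ |y| := le_abs_self y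
  have hxny : mul_nonneg (abs_nonneg x) (abs_nonneg y) = mul_nonneg (abs_nonneg x) (abs_nonneg y) := rfl
  have J2 : JoinedIn Sneg (x, y, Z) ((1:ℝ), y, Z) := by
    apply joined_seg
    intro t ht0 ht1
    simp only
    have e1 : (1-t)*(x*y) ≤ (1-t)*(|x| * |y|) :=
      mul_le_mul_of_nonneg_left hxy (by linarith)
    have e2 : t*y ≤ t*|y| := mul_le_mul_of_nonneg_left hy ht0
    have hxyn : 0 ≤ |x| * |y| := mul_nonneg (abs_nonneg x) (abs_nonneg y)
    have hyn : 0 ≤ |y| := abs_nonneg y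
    have hZ' : 0 ≤ Z^2 := sq_nonneg Z
    nlinarith [e1, e2]
  have J3 : JoinedIn Sneg ((1:ℝ), y, Z) ((1:ℝ), (-1:ℝ), Z) := by
    apply joined_seg
    intro t ht0 ht1
    simp only
    have e1 : (1-t)*y ≤ (1-t)*|y| := mul_le_mul_of_nonneg_left hy (by linarith)
    have hxyn : 0 ≤ |x| * |y| := mul_nonneg (abs_nonneg x) (abs_nonneg y)
    have hyn : 0 ≤ |y| := abs_nonneg y
    nlinarith [e1]
  have J4 : JoinedIn Sneg ((1:ℝ), (-1:ℝ), Z) ((1:ℝ), (-1:ℝ), (0:ℝ)) := by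
    apply joined_seg
    intro t ht0 ht1
    simp only
    nlinarith [sq_nonneg ((1-t)*Z + t*0)]
  exact (J2.trans J3).trans J4

/-- The set `H⁻ = {(x,y,z) ∈ ℝ³ : xy - z² < 0}` is path-connected and ample:
its convex hull equals `ℝ³`. -/
theorem stmt5 :
    IsPathConnected {p : ℝ × ℝ × ℝ | p.1 * p.2.1 - p.2.2 ^ 2 < 0} ∧
      convexHull ℝ {p : ℝ × ℝ × ℝ | p.1 * p.2.1 - p.2.2 ^ 2 < 0} = Set.univ := by
  have hSeq : {p : ℝ × ℝ × ℝ | p.1 * p.2.1 - p.2.2 ^ 2 < 0} = Sneg := rfl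
  rw [hSeq]
  constructor
  · -- path-connected
    refine ⟨((1:ℝ), (-1:ℝ), (0:ℝ)), by norm_num [Sneg, Set.mem_setOf_eq], ?_⟩
    intro p hp
    obtain ⟨x, y, z⟩ := p
    simp only [Sneg, Set.mem_setOf_eq] at hp
    set M : ℝ := |x| * |y| + |y| + |z| + 1 with hMdef
    have hxyn : 0 ≤ |x| * |y| := mul_nonneg (abs_nonneg x) (abs_nonneg y)
    have hyn : 0 ≤ |y| := abs_nonneg y
    have hzn : 0 ≤ |z| := abs_nonneg z
    have hM1 : 1 ≤ M := by simp only [hMdef]; linarith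
    have hMz : |z| ≤ M := by simp only [hMdef]; linarith
    have htail : |x| * |y| + |y| < M^2 := by nlinarith
    have hzle : z ≤ |z| := le_abs_self z
    have hznle : -|z| ≤ z := neg_abs_le z
    rcases le_or_gt 0 z with hz | hz
    · -- go up to (x, y, M)
      have J1 : JoinedIn Sneg (x, y, z) (x, y, M) := by
        apply joined_seg
        intro t ht0 ht1
        simp only
        have h1 : z ≤ (1-t)*z + t*M := by nlinarith
        have h2 : z^2 ≤ ((1-t)*z + t*M)^2 := by
          have := pow_le_pow_left₀ hz h1 2
          simpa using this
        have heq : ((1-t)*x + t*x) = x := by ring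
        have heq2 : ((1-t)*y + t*y) = y := by ring
        rw [heq, heq2]
        linarith
      exact (J1.trans (tail_joined x y M htail)).symm
    · -- go down to (x, y, -M)
      have J1 : JoinedIn Sneg (x, y, z) (x, y, -M) := by
        apply joined_seg
        intro t ht0 ht1
        simp only
        have h1 : (1-t)*z + t*(-M) ≤ z := by nlinarith
        have h2 : z^2 ≤ ((1-t)*z + t*(-M))^2 := by
          have h3 : (0:ℝ) ≤ -z := by linarith
          have h4 : -z ≤ -((1-t)*z + t*(-M)) := by linarith
          have h5 := pow_le_pow_left₀ h3 h4 2
          have h6 : (-((1-t)*z + t*(-M)))^2 = ((1-t)*z + t*(-M))^2 := by ring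
          calc z^2 = (-z)^2 := by ring
            _ ≤ (-((1-t)*z + t*(-M)))^2 := by nlinarith [h5]
            _ = _ := h6
        have heq : ((1-t)*x + t*x) = x := by ring
        have heq2 : ((1-t)*y + t*y) = y := by ring
        rw [heq, heq2]
        linarith
      have htail' : |x| * |y| + |y| < (-M)^2 := by simpa using htail
      exact (J1.trans (tail_joined x y (-M) htail')).symm
  · -- convex hull is everything
    apply Set.eq_univ_of_forall
    intro p
    obtain ⟨x, y, z⟩ := p
    set c : ℝ := |x*y| + |z| + 1 with hcdef
    have hxyle : x*y ≤ |x*y| := le_abs_self _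
    have hxyn : 0 ≤ |x*y| := abs_nonneg _
    have hzle : z ≤ |z| := le_abs_self z
    have hznle : -|z| ≤ z := neg_abs_le z
    have hzn : 0 ≤ |z| := abs_nonneg z
    have ha : ((x, y, z + c) : ℝ × ℝ × ℝ) ∈ Sneg := by
      simp only [Sneg, Set.mem_setOf_eq]
      have h1 : |x*y| + 1 ≤ z + c := by simp only [hcdef]; linarith
      nlinarith
    have hb : ((x, y, z - c) : ℝ × ℝ × ℝ) ∈ Sneg := by
      simp only [Sneg, Set.mem_setOf_eq]
      have h1 : z - c ≤ -(|x*y| + 1) := by simp only [hcdef]; linarith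
      nlinarith
    have hmem : ((x, y, z) : ℝ × ℝ × ℝ) ∈ segment ℝ (x, y, z + c) (x, y, z - c) := by
      refine ⟨1/2, 1/2, by norm_num, by norm_num, by norm_num, ?_⟩
      simp only [Prod.smul_mk, Prod.mk_add_mk, smul_eq_mul]
      norm_num
      constructor
      · ring
      · constructor
        · ring
        · ring
    exact segment_subset_convexHull ha hb hmem
end

section
/- Let V be a 5-dimensional real vector space, ξ ⊂ V a 4-dimensional subspace, λ ∈ V* with λ|_ξ ≠ 0, and let ω₁, ω₂ ∈ Λ²ξ* be linearly independent 2-forms whose restrictions to the 3-dimensional hyperplane ξ ∩ ker λ are linearly independent. Then the affine map Ψ: ξ* × ξ* → ℝ³ sending (β₁, β₂) to ((ω₁ + λ∧β₁)², (ω₂ + λ∧β₂)², (ω₁ + λ∧β₁)∧(ω₂ + λ∧β₂)) (wedge products valued in Λ⁴ξ* ≅ ℝ via a fixed volume form, where λ and βᵢ are restricted to ξ) is surjective. -/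
/-- The wedge pairing `(ω, η) ↦ ω ∧ η ∈ Λ⁴ξ* ≅ ℝ` of two 2-forms on a 4-dimensional space
`ξ`, computed in a basis `e` (the fixed volume form is `e₀∧e₁∧e₂∧e₃`). -/
def wedgePairBasis {X : Type*} (e : Fin 4 → X) (f g : X → X → ℝ) : ℝ :=
  f (e 0) (e 1) * g (e 2) (e 3) - f (e 0) (e 2) * g (e 1) (e 3)
    + f (e 0) (e 3) * g (e 1) (e 2)
    + g (e 0) (e 1) * f (e 2) (e 3) - g (e 0) (e 2) * f (e 1) (e 3)
    + g (e 0) (e 3) * f (e 1) (e 2)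

private lemma sq4 (v0 v1 v2 v3 : ℝ) (h : v0^2 + v1^2 + v2^2 + v3^2 = 0) :
    v0 = 0 ∧ v1 = 0 ∧ v2 = 0 ∧ v3 = 0 := by
  refine ⟨?_, ?_, ?_, ?_⟩ <;> nlinarith [sq_nonneg v0, sq_nonneg v1, sq_nonneg v2, sq_nonneg v3]

private lemma surj2 (d0 d1 d2 d3 p0 p1 p2 p3 : ℝ)
    (hind : ∀ u v : ℝ, u*d0 + v*p0 = 0 → u*d1 + v*p1 = 0 → u*d2 + v*p2 = 0 →
      u*d3 + v*p3 = 0 → u = 0 ∧ v = 0) (A B : ℝ) :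
    ∃ b : Fin 4 → ℝ, d0 * b 0 + d1 * b 1 + d2 * b 2 + d3 * b 3 = A ∧
      p0 * b 0 + p1 * b 1 + p2 * b 2 + p3 * b 3 = B := by
  have hD : (d0^2 + d1^2 + d2^2 + d3^2)*(p0^2 + p1^2 + p2^2 + p3^2) - (d0*p0 + d1*p1 + d2*p2 + d3*p3)^2 ≠ 0 := by
    intro hD0
    have hvv : ((p0^2 + p1^2 + p2^2 + p3^2)*d0 - (d0*p0 + d1*p1 + d2*p2 + d3*p3)*p0)^2 + ((p0^2 + p1^2 + p2^2 + p3^2)*d1 - (d0*p0 + d1*p1 + d2*p2 + d3*p3)*p1)^2 + ((p0^2 + p1^2 + p2^2 + p3^2)*d2 - (d0*p0 + d1*p1 + d2*p2 + d3*p3)*p2)^2 + ((p0^2 + p1^2 + p2^2 + p3^2)*d3 - (d0*p0 + d1*p1 + d2*p2 + d3*p3)*p3)^2 = 0 := by linear_combination (p0^2 + p1^2 + p2^2 + p3^2) * hD0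
    obtain ⟨h0, h1, h2, h3⟩ := sq4 _ _ _ _ hvv
    obtain ⟨hg22, hg12⟩ := hind (p0^2 + p1^2 + p2^2 + p3^2) (-(d0*p0 + d1*p1 + d2*p2 + d3*p3))
      (by linear_combination h0) (by linear_combination h1)
      (by linear_combination h2) (by linear_combination h3)
    obtain ⟨hp0, hp1, hp2, hp3⟩ := sq4 p0 p1 p2 p3 (by linear_combination hg22)
    exact one_ne_zero ((hind 0 1 (by linear_combination hp0) (by linear_combination hp1)
      (by linear_combination hp2) (by linear_combination hp3)).2)
  refine ⟨![(((p0^2 + p1^2 + p2^2 + p3^2)*A - (d0*p0 + d1*p1 + d2*p2 + d3*p3)*B) / ((d0^2 + d1^2 + d2^2 + d3^2)*(p0^2 + p1^2 + p2^2 + p3^2) - (d0*p0 + d1*p1 + d2*p2 + d3*p3)^2))*d0 + (((d0^2 + d1^2 + d2^2 + d3^2)*B - (d0*p0 + d1*p1 + d2*p2 + d3*p3)*A) / ((d0^2 + d1^2 + d2^2 + d3^2)*(p0^2 + p1^2 + p2^2 + p3^2) - (d0*p0 + d1*p1 + d2*p2 + d3*p3)^2))*p0, (((p0^2 + p1^2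 + p2^2 + p3^2)*A - (d0*p0 + d1*p1 + d2*p2 + d3*p3)*B) / ((d0^2 + d1^2 + d2^2 + d3^2)*(p0^2 + p1^2 + p2^2 + p3^2) - (d0*p0 + d1*p1 + d2*p2 + d3*p3)^2))*d1 + (((d0^2 + d1^2 + d2^2 + d3^2)*B - (d0*p0 + d1*p1 + d2*p2 + d3*p3)*A) / ((d0^2 + d1^2 + d2^2 + d3^2)*(p0^2 + p1^2 + p2^2 + p3^2) - (d0*p0 + d1*p1 + d2*p2 + d3*p3)^2))*p1, (((p0^2 + p1^2 + p2^2 + p3^2)*A - (d0*p0 + d1*p1 + d2*p2 + d3*p3)*B) / ((d0^2 + d1^2 + d2^2 + d3^2)*(p0^2 + p1^2 + p2^2 + p3^2) - (d0*p0 + d1*p1 + d2*p2 + d3*p3)^2))*d2 + (((d0^2 + d1^2 + d2^2 + d3^2)*B - (d0*p0 + d1*p1 + d2*p2 + d3*p3)*A) / ((d0^2 + d1^2 + d2^2 + d3^2)*(p0^2 + p1^2 + p2^2 + p3^2) - (d0*p0 + d1*p1 + d2*p2 + d3*p3)^2))*p2, (((p0^2 + p1^2 + p2^2 + p3^2)*A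 - (d0*p0 + d1*p1 + d2*p2 + d3*p3)*B) / ((d0^2 + d1^2 + d2^2 + d3^2)*(p0^2 + p1^2 + p2^2 + p3^2) - (d0*p0 + d1*p1 + d2*p2 + d3*p3)^2))*d3 + (((d0^2 + d1^2 + d2^2 + d3^2)*B - (d0*p0 + d1*p1 + d2*p2 + d3*p3)*A) / ((d0^2 + d1^2 + d2^2 + d3^2)*(p0^2 + p1^2 + p2^2 + p3^2) - (d0*p0 + d1*p1 + d2*p2 + d3*p3)^2))*p3], ?_, ?_⟩ <;>
    simp only [Matrix.cons_val_zero, Matrix.cons_val_one, Matrix.head_cons,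
      Matrix.cons_val_two, Matrix.cons_val_three, Matrix.tail_cons] <;>
    (simp only [div_mul_eq_mul_div, mul_div_assoc', ← add_div]; rw [div_eq_iff hD]; ring)

private lemma key (a0 a1 a2 a3 F01 F02 F03 F12 F13 F23 x0 x1 x2 x3 y0 y1 y2 y3 : ℝ)
    (hc0 : a1*F23 - a2*F13 + a3*F12 = 0)
    (hc1 : a0*F23 - a2*F03 + a3*F02 = 0)
    (hc2 : a0*F13 - a1*F03 + a3*F01 = 0)
    (hc3 : a0*F12 - a1*F02 + a2*F01 = 0)
    (hx : a0*x0 + a1*x1 + a2*x2 + a3*x3 = 0)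
    (hy : a0*y0 + a1*y1 + a2*y2 + a3*y3 = 0)
    (hk : a0 ≠ 0 ∨ a1 ≠ 0 ∨ a2 ≠ 0 ∨ a3 ≠ 0) :
    F01*(x0*y1 - x1*y0) + F02*(x0*y2 - x2*y0) + F03*(x0*y3 - x3*y0)
      + F12*(x1*y2 - x2*y1) + F13*(x1*y3 - x3*y1) + F23*(x2*y3 - x3*y2) = 0 := by
  rcases hk with h | h | h | h
  · have hS : a0 * (F01*(x0*y1 - x1*y0) + F02*(x0*y2 - x2*y0) + F03*(x0*y3 - x3*y0)
        + F12*(x1*y2 - x2*y1) + F13*(x1*y3 - x3*y1) + F23*(x2*y3 - x3*y2)) = 0 := by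
      linear_combination (y1*F01 + y2*F02 + y3*F03) * hx - (x1*F01 + x2*F02 + x3*F03) * hy
        + (x1*y2 - x2*y1) * hc3 + (x1*y3 - x3*y1) * hc2 + (x2*y3 - x3*y2) * hc1
    exact (mul_eq_zero.mp hS).resolve_left h
  · have hS : a1 * (F01*(x0*y1 - x1*y0) + F02*(x0*y2 - x2*y0) + F03*(x0*y3 - x3*y0)
        + F12*(x1*y2 - x2*y1) + F13*(x1*y3 - x3*y1) + F23*(x2*y3 - x3*y2)) = 0 := by
      linear_combination (-(y0*F01 - y2*F12 - y3*F13)) * hx + (x0*F01 - x2*F12 - x3*F13) * hy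
        - (x0*y2 - x2*y0) * hc3 - (x0*y3 - x3*y0) * hc2 + (x2*y3 - x3*y2) * hc0
    exact (mul_eq_zero.mp hS).resolve_left h
  · have hS : a2 * (F01*(x0*y1 - x1*y0) + F02*(x0*y2 - x2*y0) + F03*(x0*y3 - x3*y0)
        + F12*(x1*y2 - x2*y1) + F13*(x1*y3 - x3*y1) + F23*(x2*y3 - x3*y2)) = 0 := by
      linear_combination (-(y0*F02 + y1*F12 - y3*F23)) * hx + (x0*F02 + x1*F12 - x3*F23) * hy
        + (x0*y1 - x1*y0) * hc3 - (x0*y3 - x3*y0) * hc1 - (x1*y3 - x3*y1) * hc0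
    exact (mul_eq_zero.mp hS).resolve_left h
  · have hS : a3 * (F01*(x0*y1 - x1*y0) + F02*(x0*y2 - x2*y0) + F03*(x0*y3 - x3*y0)
        + F12*(x1*y2 - x2*y1) + F13*(x1*y3 - x3*y1) + F23*(x2*y3 - x3*y2)) = 0 := by
      linear_combination (-(y0*F03 + y1*F13 + y2*F23)) * hx + (x0*F03 + x1*F13 + x2*F23) * hy
        + (x0*y1 - x1*y0) * hc2 + (x0*y2 - x2*y0) * hc1 + (x1*y2 - x2*y1) * hc0
    exact (mul_eq_zero.mp hS).resolve_left h

private lemma lin_expand {V : Type*} [AddCommGroup V] [Module ℝ V] (ξ : Submodule ℝ V)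
    (e : Module.Basis (Fin 4) ℝ ξ) (l : V →ₗ[ℝ] ℝ) (x : ξ) :
    l x = e.repr x 0 * l (e 0) + e.repr x 1 * l (e 1)
      + e.repr x 2 * l (e 2) + e.repr x 3 * l (e 3) := by
  have h : (x : V) = e.repr x 0 • ((e 0 : ξ) : V) + e.repr x 1 • ((e 1 : ξ) : V)
      + e.repr x 2 • ((e 2 : ξ) : V) + e.repr x 3 • ((e 3 : ξ) : V) := by
    have h4 := e.sum_repr x
    rw [Fin.sum_univ_four] at h4
    exact_mod_cast congrArg (Subtype.val) h4.symm
  rw [h]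
  simp only [map_add, map_smul, smul_eq_mul]

private lemma bilin_expand {V : Type*} [AddCommGroup V] [Module ℝ V] {ξ : Submodule ℝ V}
    (e : Module.Basis (Fin 4) ℝ ξ) (B : ξ →ₗ[ℝ] ξ →ₗ[ℝ] ℝ) (x y : ξ) :
    B x y = ∑ i, ∑ j, e.repr x i * e.repr y j * B (e i) (e j) := by
  have h1 : B x y = ∑ j, e.repr y j * B x (e j) := by
    conv_lhs => rw [← e.sum_repr y]
    rw [map_sum]
    exact Finset.sum_congr rfl fun j _ => by rw [map_smul, smul_eq_mul]
  have h2 : ∀ j, B x (e j) = ∑ i, e.repr x i * B (e i) (e j) := by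
    intro j
    conv_lhs => rw [← e.sum_repr x]
    rw [map_sum, LinearMap.sum_apply]
    exact Finset.sum_congr rfl fun i _ => by rw [map_smul, LinearMap.smul_apply, smul_eq_mul]
  rw [h1]
  simp_rw [h2, Finset.mul_sum]
  rw [Finset.sum_comm]
  exact Finset.sum_congr rfl fun i _ => Finset.sum_congr rfl fun j _ => by ring

set_option maxHeartbeats 1000000 in
/-- let `V` be a 5-dimensional real vector space, `ξ ⊆ V` a 4-dimensional
subspace (with a volume form given by a basis `e`), `λ ∈ V*` with `λ|_ξ ≠ 0`, and
`ω₁, ω₂` linearly independent 2-forms on `ξ` whose restrictions to the 3-dimensional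
hyperplane `ξ ∩ ker λ` are still linearly independent.  Then the affine map
`Ψ : ξ* × ξ* → ℝ³` sending `(β₁, β₂)` to
`((ω₁+λ∧β₁)², (ω₂+λ∧β₂)², (ω₁+λ∧β₁)∧(ω₂+λ∧β₂))` (wedges valued in `Λ⁴ξ* ≅ ℝ`)
is surjective. -/
theorem stmt19 {V : Type*} [AddCommGroup V] [Module ℝ V]
    (hV : Module.finrank ℝ V = 5)
    (ξ : Submodule ℝ V) (hξ : Module.finrank ℝ ξ = 4) (e : Module.Basis (Fin 4) ℝ ξ)
    (l : V →ₗ[ℝ] ℝ) (hl : ∃ v ∈ ξ, l v ≠ 0)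
    (ω₁ ω₂ : ξ →ₗ[ℝ] ξ →ₗ[ℝ] ℝ)
    (h₁ : ∀ x : ξ, ω₁ x x = 0) (h₂ : ∀ x : ξ, ω₂ x x = 0)
    (hind : ∀ a b : ℝ, a • ω₁ + b • ω₂ = 0 → a = 0 ∧ b = 0)
    (hindker : ∀ a b : ℝ,
      (∀ x y : ξ, l x = 0 → l y = 0 → a * ω₁ x y + b * ω₂ x y = 0) → a = 0 ∧ b = 0) :
    Function.Surjective (fun β : (ξ →ₗ[ℝ] ℝ) × (ξ →ₗ[ℝ] ℝ) =>
      ((wedgePairBasis e (fun x y : ξ => ω₁ x y + (l x * β.1 y - l y * β.1 x))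
          (fun x y : ξ => ω₁ x y + (l x * β.1 y - l y * β.1 x)),
        wedgePairBasis e (fun x y : ξ => ω₂ x y + (l x * β.2 y - l y * β.2 x))
          (fun x y : ξ => ω₂ x y + (l x * β.2 y - l y * β.2 x)),
        wedgePairBasis e (fun x y : ξ => ω₁ x y + (l x * β.1 y - l y * β.1 x))
          (fun x y : ξ => ω₂ x y + (l x * β.2 y - l y * β.2 x))) : ℝ × ℝ × ℝ)) := by
  intro z
  obtain ⟨A, B, C⟩ := z
  have ha1 : ∀ x y : ξ, ω₁ y x = -ω₁ x y := by
    intro x y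
    have h := h₁ (x + y)
    simp only [map_add, LinearMap.add_apply, h₁] at h
    linarith
  have ha2 : ∀ x y : ξ, ω₂ y x = -ω₂ x y := by
    intro x y
    have h := h₂ (x + y)
    simp only [map_add, LinearMap.add_apply, h₂] at h
    linarith
  have hk : l (e 0) ≠ 0 ∨ l (e 1) ≠ 0 ∨ l (e 2) ≠ 0 ∨ l (e 3) ≠ 0 := by
    by_contra hcon
    push_neg at hcon
    obtain ⟨v, hv, hlv⟩ := hl
    apply hlv
    have hx := lin_expand ξ e l ⟨v, hv⟩
    rw [hcon.1, hcon.2.1, hcon.2.2.1, hcon.2.2.2] at hx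
    simpa using hx
  have hIND : ∀ u v : ℝ,
      u * (-(l (e 1)*ω₁ (e 2) (e 3) - l (e 2)*ω₁ (e 1) (e 3) + l (e 3)*ω₁ (e 1) (e 2))) + v * (-(l (e 1)*ω₂ (e 2) (e 3) - l (e 2)*ω₂ (e 1) (e 3) + l (e 3)*ω₂ (e 1) (e 2))) = 0 →
      u * (l (e 0)*ω₁ (e 2) (e 3) - l (e 2)*ω₁ (e 0) (e 3) + l (e 3)*ω₁ (e 0) (e 2)) + v * (l (e 0)*ω₂ (e 2) (e 3) - l (e 2)*ω₂ (e 0) (e 3) + l (e 3)*ω₂ (e 0) (e 2)) = 0 →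
      u * (-(l (e 0)*ω₁ (e 1) (e 3) - l (e 1)*ω₁ (e 0) (e 3) + l (e 3)*ω₁ (e 0) (e 1))) + v * (-(l (e 0)*ω₂ (e 1) (e 3) - l (e 1)*ω₂ (e 0) (e 3) + l (e 3)*ω₂ (e 0) (e 1))) = 0 →
      u * (l (e 0)*ω₁ (e 1) (e 2) - l (e 1)*ω₁ (e 0) (e 2) + l (e 2)*ω₁ (e 0) (e 1)) + v * (l (e 0)*ω₂ (e 1) (e 2) - l (e 1)*ω₂ (e 0) (e 2) + l (e 2)*ω₂ (e 0) (e 1)) = 0 →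
      u = 0 ∧ v = 0 := by
    intro u v h0 h1 h2 h3
    apply hindker u v
    intro x y hx hy
    rw [lin_expand ξ e l x] at hx
    rw [lin_expand ξ e l y] at hy
    rw [bilin_expand e ω₁ x y, bilin_expand e ω₂ x y]
    simp only [Fin.sum_univ_four]
    have K := key (l (e 0)) (l (e 1)) (l (e 2)) (l (e 3)) (u * ω₁ (e 0) (e 1) + v * ω₂ (e 0) (e 1)) (u * ω₁ (e 0) (e 2) + v * ω₂ (e 0) (e 2)) (u * ω₁ (e 0) (e 3) + v * ω₂ (e 0) (e 3)) (u * ω₁ (e 1) (e 2) + v * ω₂ (e 1) (e 2)) (u * ω₁ (e 1) (e 3) + v * ω₂ (e 1) (e 3)) (u * ω₁ (e 2) (e 3) + v * ω₂ (e 2) (e 3)) (e.repr x 0) (e.repr x 1) (e.repr x 2) (e.repr x 3) (e.repr y 0) (e.repr y 1) (e.repr y 2) (e.repr y 3)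
      (by linear_combination -h0) (by linear_combination h1)
      (by linear_combination -h2) (by linear_combination h3)
      (by linear_combination hx) (by linear_combination hy) hk
    linear_combination K
      + (u * (e.repr x 1) * (e.repr y 0)) * ha1 (e 0) (e 1)
      + (v * (e.repr x 1) * (e.repr y 0)) * ha2 (e 0) (e 1)
      + (u * (e.repr x 2) * (e.repr y 0)) * ha1 (e 0) (e 2)
      + (v * (e.repr x 2) * (e.repr y 0)) * ha2 (e 0) (e 2)
      + (u * (e.repr x 3) * (e.repr y 0)) * ha1 (e 0) (e 3)
      + (v * (e.repr x 3) * (e.repr y 0)) * ha2 (e 0) (e 3)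
      + (u * (e.repr x 2) * (e.repr y 1)) * ha1 (e 1) (e 2)
      + (v * (e.repr x 2) * (e.repr y 1)) * ha2 (e 1) (e 2)
      + (u * (e.repr x 3) * (e.repr y 1)) * ha1 (e 1) (e 3)
      + (v * (e.repr x 3) * (e.repr y 1)) * ha2 (e 1) (e 3)
      + (u * (e.repr x 3) * (e.repr y 2)) * ha1 (e 2) (e 3)
      + (v * (e.repr x 3) * (e.repr y 2)) * ha2 (e 2) (e 3)
      + (u * (e.repr x 0) * (e.repr y 0)) * h₁ (e 0)
      + (v * (e.repr x 0) * (e.repr y 0)) * h₂ (e 0)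
      + (u * (e.repr x 1) * (e.repr y 1)) * h₁ (e 1)
      + (v * (e.repr x 1) * (e.repr y 1)) * h₂ (e 1)
      + (u * (e.repr x 2) * (e.repr y 2)) * h₁ (e 2)
      + (v * (e.repr x 2) * (e.repr y 2)) * h₂ (e 2)
      + (u * (e.repr x 3) * (e.repr y 3)) * h₁ (e 3)
      + (v * (e.repr x 3) * (e.repr y 3)) * h₂ (e 3)
  obtain ⟨b, hb1, hb2⟩ := surj2 (-(l (e 1)*ω₁ (e 2) (e 3) - l (e 2)*ω₁ (e 1) (e 3) + l (e 3)*ω₁ (e 1) (e 2))) (l (e 0)*ω₁ (e 2) (e 3) - l (e 2)*ω₁ (e 0) (e 3) + l (e 3)*ω₁ (e 0) (e 2)) (-(l (e 0)*ω₁ (e 1) (e 3) - l (e 1)*ω₁ (e 0) (e 3) + l (e 3)*ω₁ (e 0) (e 1))) (l (e 0)*ω₁ (e 1) (e 2) - l (e 1)*ω₁ (e 0) (e 2) + l (e 2)*ω₁ (e 0) (e 1)) (-(l (e 1)*ω₂ (e 2) (e 3) - l (e 2)*ω₂ (e 1) (e 3) + l (e 3)*ω₂ (e 1) (e 2))) (l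 (e 0)*ω₂ (e 2) (e 3) - l (e 2)*ω₂ (e 0) (e 3) + l (e 3)*ω₂ (e 0) (e 2)) (-(l (e 0)*ω₂ (e 1) (e 3) - l (e 1)*ω₂ (e 0) (e 3) + l (e 3)*ω₂ (e 0) (e 1))) (l (e 0)*ω₂ (e 1) (e 2) - l (e 1)*ω₂ (e 0) (e 2) + l (e 2)*ω₂ (e 0) (e 1))
    hIND (A/2 - (ω₁ (e 0) (e 1)*ω₁ (e 2) (e 3) - ω₁ (e 0) (e 2)*ω₁ (e 1) (e 3) + ω₁ (e 0) (e 3)*ω₁ (e 1) (e 2))) 0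
  obtain ⟨c, hc1, hc2⟩ := surj2 (-(l (e 1)*ω₁ (e 2) (e 3) - l (e 2)*ω₁ (e 1) (e 3) + l (e 3)*ω₁ (e 1) (e 2))) (l (e 0)*ω₁ (e 2) (e 3) - l (e 2)*ω₁ (e 0) (e 3) + l (e 3)*ω₁ (e 0) (e 2)) (-(l (e 0)*ω₁ (e 1) (e 3) - l (e 1)*ω₁ (e 0) (e 3) + l (e 3)*ω₁ (e 0) (e 1))) (l (e 0)*ω₁ (e 1) (e 2) - l (e 1)*ω₁ (e 0) (e 2) + l (e 2)*ω₁ (e 0) (e 1)) (-(l (e 1)*ω₂ (e 2) (e 3) - l (e 2)*ω₂ (e 1) (e 3) + l (e 3)*ω₂ (e 1) (e 2))) (l (e 0)*ω₂ (e 2) (e 3) - l (e 2)*ω₂ (e 0) (e 3) + l (e 3)*ω₂ (e 0) (e 2)) (-(l (e 0)*ω₂ (e 1) (e 3) - l (e 1)*ω₂ (e 0) (e 3) + l (e 3)*ω₂ (e 0) (e 1))) (l (e 0)*ω₂ (e 1) (e 2) - l (e 1)*ω₂ (e 0) (e 2) + l (e 2)*ω₂ (e 0) (e 1))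
    hIND (C - (ω₁ (e 0) (e 1)*ω₂ (e 2) (e 3) - ω₁ (e 0) (e 2)*ω₂ (e 1) (e 3) + ω₁ (e 0) (e 3)*ω₂ (e 1) (e 2) + ω₂ (e 0) (e 1)*ω₁ (e 2) (e 3) - ω₂ (e 0) (e 2)*ω₁ (e 1) (e 3) + ω₂ (e 0) (e 3)*ω₁ (e 1) (e 2))) (B/2 - (ω₂ (e 0) (e 1)*ω₂ (e 2) (e 3) - ω₂ (e 0) (e 2)*ω₂ (e 1) (e 3) + ω₂ (e 0) (e 3)*ω₂ (e 1) (e 2)))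
  refine ⟨(e.constr ℝ b, e.constr ℝ c), ?_⟩
  simp only [wedgePairBasis, Module.Basis.constr_basis, Prod.mk.injEq]
  refine ⟨?_, ?_, ?_⟩
  · linear_combination 2 * hb1
  · linear_combination 2 * hc2
  · linear_combination hc1 + hb2
end
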